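/- For the always synchronizing objective in an MDP, the three winning modes coincide: the set of initial distributions that are sure winning, almost-sure winning, and limit-sure winning for always synchronizing in T (with function sum_T) are equal. -/

import Mathlib

open Finset

structure MDP (Q A : Type) [Fintype Q] [Fintype A] where
  δ : Q → A → Q → ℝ
  nonneg : ∀ q a q', 0 ≤ δ q a q'
  sum_one : ∀ q a, ∑ q', δ q a q' = 1

structure Strat (Q A : Type) [Fintype A] where
  σ : List Q → A → ℝ
  nonneg : ∀ h a, 0 ≤ σ h a
  sum_one : ∀ h, ∑ a, σ h a = 1

variable {Q A : Type} [Fintype Q] [DecidableEq Q] [Fintype A]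

/-- Probability of a path of length `n` (i.e. `n+1` states) from initial
distribution `μ0` under strategy `α`. The history passed to the strategy is
the list of visited states, most recent first. -/
noncomputable def pathProb (M : MDP Q A) (μ0 : Q → ℝ) (α : Strat Q A)
    {n : ℕ} (π : Fin (n + 1) → Q) : ℝ :=
  μ0 (π 0) *
    ∏ i : Fin n,
      ∑ a,
        α.σ (List.ofFn (fun j : Fin (i.1 + 1) =>
            π ⟨i.1 - j.1, lt_of_le_of_lt (Nat.sub_le i.1 j.1) (Nat.lt_succ_of_lt i.isLt)⟩)) a *
          M.δ (π i.castSucc) a (π i.succ)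

/-- Distribution over states after `n` steps. -/
noncomputable def Mdist (M : MDP Q A) (μ0 : Q → ℝ) (α : Strat Q A) (n : ℕ) (q : Q) : ℝ :=
  ∑ π : Fin (n + 1) → Q, if π (Fin.last n) = q then pathProb M μ0 α π else 0

/-- Probability mass in `T` after `n` steps. -/
noncomputable def Mmass (M : MDP Q A) (μ0 : Q → ℝ) (α : Strat Q A) (n : ℕ) (T : Finset Q) : ℝ :=
  ∑ q ∈ T, Mdist M μ0 α n q

open scoped Classical in
/-- Support of the transition `δ(q,a)`. -/
noncomputable def post (M : MDP Q A) (q : Q) (a : A) : Finset Q :=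
  Finset.univ.filter (fun q' => 0 < M.δ q a q')

open scoped Classical in
/-- One-step predecessor operator. -/
noncomputable def PreM (M : MDP Q A) (S : Finset Q) : Finset Q :=
  Finset.univ.filter (fun q => ∃ a, post M q a ⊆ S)

def IsDist (μ : Q → ℝ) : Prop := (∀ q, 0 ≤ μ q) ∧ ∑ q, μ q = 1

def dirac (q0 : Q) : Q → ℝ := fun q => if q = q0 then (1 : ℝ) else 0

def PureStrat (α : Strat Q A) : Prop := ∀ h, ∃ a, α.σ h a = 1


namespace AlwaysSync

variable {Q A : Type} [Fintype Q] [DecidableEq Q] [Fintype A]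

noncomputable def shiftStrat (α : Strat Q A) (q0 : Q) : Strat Q A where
  σ := fun h a => α.σ (h ++ [q0]) a
  nonneg := fun h a => α.nonneg _ a
  sum_one := fun h => α.sum_one _

lemma snoc_val {n : ℕ} (ρ : Fin (n+1) → Q) (q : Q) (m : ℕ) (h2 : m < n+2) (h : m < n+1) :
    (Fin.snoc ρ q : Fin (n+2) → Q) ⟨m, h2⟩ = ρ ⟨m, h⟩ := by
  have : (⟨m, h2⟩ : Fin (n+2)) = Fin.castSucc ⟨m, h⟩ := rfl
  rw [this, Fin.snoc_castSucc]

lemma pathProb_snoc (M : MDP Q A) (μ0 : Q → ℝ) (α : Strat Q A) {n : ℕ}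
    (ρ : Fin (n + 1) → Q) (q : Q) :
    pathProb M μ0 α (Fin.snoc ρ q) =
      pathProb M μ0 α ρ *
        ∑ a, α.σ (List.ofFn (fun j : Fin (n + 1) =>
            ρ ⟨n - j.1, lt_of_le_of_lt (Nat.sub_le n j.1) (Nat.lt_succ_self n)⟩)) a *
          M.δ (ρ (Fin.last n)) a q := by
  unfold pathProb
  rw [Fin.prod_univ_castSucc]
  have h0 : (Fin.snoc ρ q : Fin (n+2) → Q) 0 = ρ 0 := by
    apply snoc_val
  rw [h0]
  conv_rhs => rw [mul_assoc]
  have key : ∀ (k : ℕ) (hk : k < n + 1),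
      (List.ofFn fun j : Fin (k+1) => (Fin.snoc ρ q : Fin (n+2) → Q) ⟨k - j.1, by omega⟩)
        = List.ofFn fun j : Fin (k+1) => ρ ⟨k - j.1, by omega⟩ := by
    intro k hk
    congr 1
    funext j
    exact snoc_val ρ q _ _ (by omega)
  congr 1
  congr 1
  · apply Finset.prod_congr rfl
    intro i _
    simp only [Fin.coe_castSucc, Fin.succ_castSucc, Fin.snoc_castSucc]
    rw [key i.1 (by omega)]
  · simp only [Fin.val_last, Fin.snoc_castSucc, Fin.succ_last, Fin.snoc_last]
    rw [key n (by omega)]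

lemma pathProb_nonneg (M : MDP Q A) {μ0 : Q → ℝ} (h0 : ∀ q, 0 ≤ μ0 q) (α : Strat Q A)
    {n : ℕ} (π : Fin (n + 1) → Q) : 0 ≤ pathProb M μ0 α π := by
  unfold pathProb
  apply mul_nonneg (h0 _)
  apply Finset.prod_nonneg
  intro i _
  apply Finset.sum_nonneg
  intro a _
  exact mul_nonneg (α.nonneg _ a) (M.nonneg _ a _)

lemma sum_pathProb (M : MDP Q A) {μ0 : Q → ℝ} (hμ : ∑ q, μ0 q = 1) (α : Strat Q A)
    (n : ℕ) : ∑ π : Fin (n + 1) → Q, pathProb M μ0 α π = 1 := by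
  induction n with
  | zero =>
    have h : ∀ π : Fin 1 → Q, pathProb M μ0 α π = μ0 (π 0) := by
      intro π; unfold pathProb; simp
    simp only [h]
    rw [← Equiv.sum_comp (Equiv.funUnique (Fin 1) Q).symm (fun π : Fin 1 → Q => μ0 (π 0))]
    simpa using hμ
  | succ n ih =>
    rw [← Equiv.sum_comp (Fin.snocEquiv (fun _ : Fin (n+2) => Q))
        (fun π : Fin (n+2) → Q => pathProb M μ0 α π), Fintype.sum_prod_type]
    have he : ∀ (p : Q × (Fin (n+1) → Q)),
        (Fin.snocEquiv (fun _ : Fin (n+2) => Q)) p = Fin.snoc p.2 p.1 := fun p => rfl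
    simp only [he]
    rw [Finset.sum_comm]
    have hρ : ∀ ρ : Fin (n+1) → Q, ∑ q, pathProb M μ0 α (Fin.snoc ρ q) = pathProb M μ0 α ρ := by
      intro ρ
      simp only [pathProb_snoc]
      rw [← Finset.mul_sum, Finset.sum_comm]
      have : ∀ a : A, ∑ q, α.σ (List.ofFn (fun j : Fin (n + 1) =>
          ρ ⟨n - j.1, lt_of_le_of_lt (Nat.sub_le n j.1) (Nat.lt_succ_self n)⟩)) a *
            M.δ (ρ (Fin.last n)) a q = α.σ (List.ofFn (fun j : Fin (n + 1) =>
          ρ ⟨n - j.1, lt_of_le_of_lt (Nat.sub_le n j.1) (Nat.lt_succ_self n)⟩)) a := by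
        intro a
        rw [← Finset.mul_sum, M.sum_one, mul_one]
      rw [Finset.sum_congr rfl (fun a _ => this a), α.sum_one, mul_one]
    rw [Finset.sum_congr rfl (fun ρ _ => hρ ρ), ih]

lemma Mdist_zero (M : MDP Q A) (μ0 : Q → ℝ) (α : Strat Q A) (q : Q) :
    Mdist M μ0 α 0 q = μ0 q := by
  unfold Mdist
  rw [← Equiv.sum_comp (Equiv.funUnique (Fin 1) Q).symm
      (fun π : Fin 1 → Q => if π (Fin.last 0) = q then pathProb M μ0 α π else 0)]
  have h : ∀ x : Q, (if ((Equiv.funUnique (Fin 1) Q).symm x) (Fin.last 0) = q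
      then pathProb M μ0 α ((Equiv.funUnique (Fin 1) Q).symm x) else 0)
      = if x = q then μ0 x else 0 := by
    intro x
    have : pathProb M μ0 α ((Equiv.funUnique (Fin 1) Q).symm x) = μ0 x := by
      unfold pathProb; simp
    rw [show ((Equiv.funUnique (Fin 1) Q).symm x) (Fin.last 0) = x from rfl, this]
  simp only [h]
  simp

lemma sum_Mdist (M : MDP Q A) {μ0 : Q → ℝ} (hμ : ∑ q, μ0 q = 1) (α : Strat Q A) (n : ℕ) :
    ∑ q, Mdist M μ0 α n q = 1 := by
  unfold Mdist
  rw [Finset.sum_comm]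
  have h : ∀ π : Fin (n+1) → Q,
      ∑ q, (if π (Fin.last n) = q then pathProb M μ0 α π else 0) = pathProb M μ0 α π := by
    intro π
    rw [Finset.sum_ite_eq Finset.univ (π (Fin.last n)) (fun _ => pathProb M μ0 α π)]
    simp
  rw [Finset.sum_congr rfl (fun π _ => h π)]
  exact sum_pathProb M hμ α n

lemma Mdist_nonneg (M : MDP Q A) {μ0 : Q → ℝ} (h0 : ∀ q, 0 ≤ μ0 q) (α : Strat Q A)
    (n : ℕ) (q : Q) : 0 ≤ Mdist M μ0 α n q := by
  apply Finset.sum_nonneg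
  intro π _
  split
  · exact pathProb_nonneg M h0 α π
  · exact le_refl 0
  
lemma Mmass_nonneg (M : MDP Q A) {μ0 : Q → ℝ} (h0 : ∀ q, 0 ≤ μ0 q) (α : Strat Q A)
    (n : ℕ) (T : Finset Q) : 0 ≤ Mmass M μ0 α n T :=
  Finset.sum_nonneg (fun q _ => Mdist_nonneg M h0 α n q)

lemma Mmass_le_one (M : MDP Q A) {μ0 : Q → ℝ} (hμ : IsDist μ0) (α : Strat Q A)
    (n : ℕ) (T : Finset Q) : Mmass M μ0 α n T ≤ 1 := by
  unfold Mmass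
  calc ∑ q ∈ T, Mdist M μ0 α n q ≤ ∑ q, Mdist M μ0 α n q :=
        Finset.sum_le_sum_of_subset_of_nonneg (Finset.subset_univ T)
          (fun q _ _ => Mdist_nonneg M hμ.1 α n q)
    _ = 1 := sum_Mdist M hμ.2 α n

lemma dirac_isDist (q0 : Q) : IsDist (dirac q0 : Q → ℝ) := by
  constructor
  · intro q; unfold dirac; split <;> norm_num
  · unfold dirac; simp

lemma sum_mul_ite {s : Finset Q} (w p : Q → ℝ) (c : Prop) [Decidable c] :
    ∑ x ∈ s, w x * (if c then p x else 0) = if c then ∑ x ∈ s, w x * p x else 0 := by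
  split <;> simp

lemma pathProb_dirac (M : MDP Q A) (μ0 : Q → ℝ) (α : Strat Q A) {n : ℕ}
    (π : Fin (n + 1) → Q) :
    pathProb M μ0 α π = μ0 (π 0) * pathProb M (dirac (π 0)) α π := by
  unfold pathProb dirac
  rw [if_pos rfl]; ring

lemma pathProb_dirac_ne (M : MDP Q A) {q0 : Q} (α : Strat Q A) {n : ℕ}
    (π : Fin (n + 1) → Q) (h : π 0 ≠ q0) :
    pathProb M (dirac q0) α π = 0 := by
  unfold pathProb dirac
  rw [if_neg h, zero_mul]

lemma pathProb_cons (M : MDP Q A) (μ0 : Q → ℝ) (α : Strat Q A) {n : ℕ}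
    (c : Q) (ρ : Fin (n + 1) → Q) :
    pathProb M μ0 α (Fin.cons c ρ) =
      μ0 c * ((∑ a, α.σ [c] a * M.δ c a (ρ 0)) *
        pathProb M (dirac (ρ 0)) (shiftStrat α c) ρ) := by
  unfold pathProb
  rw [Fin.prod_univ_succ]
  have h0 : (Fin.cons c ρ : Fin (n+2) → Q) 0 = c := rfl
  have key : ∀ (k : ℕ) (hk : k < n + 1),
      (List.ofFn fun j : Fin (k+2) => (Fin.cons c ρ : Fin (n+2) → Q) ⟨k + 1 - j.1, by omega⟩)
        = (List.ofFn fun j : Fin (k+1) => ρ ⟨k - j.1, by omega⟩) ++ [c] := by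
    intro k hk
    rw [List.ofFn_succ']
    have hlast : (Fin.cons c ρ : Fin (n+2) → Q) ⟨k + 1 - (Fin.last (k+1)).1, by omega⟩ = c := by
      have : (⟨k + 1 - (Fin.last (k+1)).1, by omega⟩ : Fin (n+2)) = 0 := by
        apply Fin.ext; simp
      rw [this]; rfl
    rw [hlast, List.concat_eq_append]
    congr 1
    simp only [Fin.coe_castSucc]
    congr 1
    funext j
    have : (⟨k + 1 - j.1, by omega⟩ : Fin (n+2))
        = Fin.succ ⟨k - j.1, by omega⟩ := by
      apply Fin.ext; simp [Fin.val_succ]; omega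
    rw [this, Fin.cons_succ]
  rw [h0, show dirac (ρ 0) (ρ 0) = (1:ℝ) from if_pos rfl, one_mul]
  congr 1
  congr 1
  apply Finset.prod_congr rfl
  intro i _
  simp only [Fin.val_succ]
  rw [key i.1 (by omega)]
  apply Finset.sum_congr rfl
  intro a _
  congr 1

noncomputable def stepW (M : MDP Q A) (α : Strat Q A) (c : Q) (q1 : Q) : ℝ :=
  ∑ a, α.σ [c] a * M.δ c a q1

lemma stepW_nonneg (M : MDP Q A) (α : Strat Q A) (c q1 : Q) : 0 ≤ stepW M α c q1 :=
  Finset.sum_nonneg fun a _ => mul_nonneg (α.nonneg _ a) (M.nonneg _ a _)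

lemma stepW_sum (M : MDP Q A) (α : Strat Q A) (c : Q) : ∑ q1, stepW M α c q1 = 1 := by
  unfold stepW
  rw [Finset.sum_comm]
  have : ∀ a : A, ∑ q1, α.σ [c] a * M.δ c a q1 = α.σ [c] a := by
    intro a; rw [← Finset.mul_sum, M.sum_one, mul_one]
  rw [Finset.sum_congr rfl (fun a _ => this a), α.sum_one]

lemma Mdist_succ (M : MDP Q A) (μ0 : Q → ℝ) (α : Strat Q A) {n : ℕ} (q : Q) :
    Mdist M μ0 α (n+1) q =
      ∑ c, μ0 c * ∑ q1, stepW M α c q1 * Mdist M (dirac q1) (shiftStrat α c) n q := by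
  classical
  have hpt : ∀ (c : Q) (ρ : Fin (n+1) → Q),
      ∑ q1, stepW M α c q1 * pathProb M (dirac q1) (shiftStrat α c) ρ
        = stepW M α c (ρ 0) * pathProb M (dirac (ρ 0)) (shiftStrat α c) ρ := by
    intro c ρ
    rw [Finset.sum_eq_single (ρ 0)]
    · intro q1 _ hne
      rw [pathProb_dirac_ne M _ ρ (fun h => hne h.symm), mul_zero]
    · intro h; exact absurd (Finset.mem_univ _) h
  have hR : ∀ c : Q, ∑ q1, stepW M α c q1 * Mdist M (dirac q1) (shiftStrat α c) n q
      = ∑ ρ : Fin (n+1) → Q, (if ρ (Fin.last n) = q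
          then stepW M α c (ρ 0) * pathProb M (dirac (ρ 0)) (shiftStrat α c) ρ else 0) := by
    intro c
    unfold Mdist
    simp only [Finset.mul_sum]
    rw [Finset.sum_comm]
    apply Finset.sum_congr rfl
    intro ρ _
    by_cases hρ : ρ (Fin.last n) = q
    · simp only [hρ, if_true]
      exact hpt c ρ
    · simp [hρ]
  simp only [hR]
  unfold Mdist
  rw [← Equiv.sum_comp (Fin.consEquiv (fun _ : Fin (n+2) => Q))
      (fun π : Fin (n+2) → Q => if π (Fin.last (n+1)) = q then pathProb M μ0 α π else 0),
    Fintype.sum_prod_type]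
  apply Finset.sum_congr rfl
  intro c _
  rw [Finset.mul_sum]
  apply Finset.sum_congr rfl
  intro ρ _
  have he : (Fin.consEquiv (fun _ : Fin (n+2) => Q)) (c, ρ) = Fin.cons c ρ := rfl
  rw [he]
  have hlast : (Fin.cons c ρ : Fin (n+2) → Q) (Fin.last (n+1)) = ρ (Fin.last n) := by
    rw [← Fin.succ_last, Fin.cons_succ]
  rw [hlast, pathProb_cons]
  by_cases hρ : ρ (Fin.last n) = q
  · simp only [hρ, if_true]
    unfold stepW
    ring
  · simp [hρ]

lemma Mmass_succ (M : MDP Q A) (μ0 : Q → ℝ) (α : Strat Q A) {n : ℕ} (T : Finset Q) :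
    Mmass M μ0 α (n+1) T =
      ∑ c, μ0 c * ∑ q1, stepW M α c q1 * Mmass M (dirac q1) (shiftStrat α c) n T := by
  unfold Mmass
  simp only [Mdist_succ]
  rw [Finset.sum_comm]
  apply Finset.sum_congr rfl
  intro c _
  rw [← Finset.mul_sum]
  congr 1
  rw [Finset.sum_comm]
  apply Finset.sum_congr rfl
  intro q1 _
  rw [← Finset.mul_sum]

lemma Mmass_decomp (M : MDP Q A) (μ0 : Q → ℝ) (α : Strat Q A) (n : ℕ) (T : Finset Q) :
    Mmass M μ0 α n T = ∑ q0, μ0 q0 * Mmass M (dirac q0) α n T := by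
  unfold Mmass Mdist
  have key : ∀ π : Fin (n+1) → Q,
      ∑ q0, μ0 q0 * pathProb M (dirac q0) α π = pathProb M μ0 α π := by
    intro π
    rw [Finset.sum_eq_single (π 0)]
    · exact (pathProb_dirac M μ0 α π).symm
    · intro q0 _ hne
      rw [pathProb_dirac_ne M α π (fun h => hne h.symm), mul_zero]
    · intro h; exact absurd (Finset.mem_univ _) h
  simp only [Finset.mul_sum]
  symm
  conv_lhs => rw [Finset.sum_comm]
  apply Finset.sum_congr rfl
  intro q _
  conv_lhs => rw [Finset.sum_comm]
  apply Finset.sum_congr rfl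
  intro π _
  rw [sum_mul_ite, key π]

open scoped Classical in
noncomputable def SIter (M : MDP Q A) (T : Finset Q) : ℕ → Finset Q
  | 0 => Finset.univ
  | k+1 => T ∩ PreM M (SIter M T k)

lemma PreM_mono (M : MDP Q A) {S S' : Finset Q} (h : S ⊆ S') : PreM M S ⊆ PreM M S' := by
  classical
  intro q hq
  unfold PreM at *
  rw [Finset.mem_filter] at *
  obtain ⟨-, a, ha⟩ := hq
  exact ⟨Finset.mem_univ q, a, ha.trans h⟩

lemma SIter_antitone (M : MDP Q A) (T : Finset Q) : ∀ k, SIter M T (k+1) ⊆ SIter M T k := by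
  intro k
  induction k with
  | zero => intro q _; exact Finset.mem_univ q
  | succ k ih =>
    show T ∩ PreM M (SIter M T (k+1)) ⊆ T ∩ PreM M (SIter M T k)
    exact Finset.inter_subset_inter (le_refl T) (PreM_mono M ih)

lemma SIter_fix (M : MDP Q A) (T : Finset Q) : ∃ N, SIter M T (N+1) = SIter M T N := by
  by_contra h
  push_neg at h
  have hcard : ∀ k, (SIter M T k).card + k ≤ Fintype.card Q := by
    intro k
    induction k with
    | zero => simpa using Finset.card_le_univ (SIter M T 0)
    | succ k ih =>
      have hlt : (SIter M T (k+1)).card < (SIter M T k).card :=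
        Finset.card_lt_card ⟨SIter_antitone M T k, fun hsub =>
          h k (le_antisymm (SIter_antitone M T k) hsub)⟩
      omega
  have := hcard (Fintype.card Q + 1)
  omega

open scoped Classical in
/-- The pure strategy that picks a fixed good action per current state. -/
noncomputable def winStrat [Nonempty A] (M : MDP Q A) (W : Finset Q) (q_def : Q) : Strat Q A where
  σ := fun h a => if a = (if hex : ∃ a', post M (h.head?.getD q_def) a' ⊆ W
      then hex.choose else Classical.arbitrary A) then 1 else 0
  nonneg := by intro h a; split <;> split <;> norm_num
  sum_one := by intro h; simp

open scoped Classical in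
lemma winStrat_pick [Nonempty A] (M : MDP Q A) (W : Finset Q) (q_def : Q)
    (h : List Q) (a : A) (hne : (winStrat M W q_def).σ h a ≠ 0) :
    a = (if hex : ∃ a', post M (h.head?.getD q_def) a' ⊆ W then hex.choose
      else Classical.arbitrary A) := by
  unfold winStrat at hne
  dsimp only at hne
  by_contra hc
  rw [if_neg hc] at hne
  exact hne rfl

open scoped Classical in
lemma winStrat_path [Nonempty A] (M : MDP Q A) (T W : Finset Q)
    (hWfix : W = T ∩ PreM M W) {μ0 : Q → ℝ}
    (hsupp : ∀ q, μ0 q ≠ 0 → q ∈ W) {n : ℕ} (π : Fin (n+1) → Q) (q_def : Q)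
    (hp : pathProb M μ0 (winStrat M W q_def) π ≠ 0) : ∀ i, π i ∈ W := by
  unfold pathProb at hp
  have h1 : μ0 (π 0) ≠ 0 := fun h => hp (by rw [h, zero_mul])
  have h2 : ∀ i : Fin n, (∑ a, (winStrat M W q_def).σ
      (List.ofFn (fun j : Fin (i.1 + 1) =>
        π ⟨i.1 - j.1, lt_of_le_of_lt (Nat.sub_le i.1 j.1) (Nat.lt_succ_of_lt i.isLt)⟩)) a *
      M.δ (π i.castSucc) a (π i.succ)) ≠ 0 := by
    intro i
    intro hzero
    apply hp
    rw [Finset.prod_eq_zero (Finset.mem_univ i) hzero, mul_zero]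
  intro i
  induction i using Fin.induction with
  | zero => exact hsupp _ h1
  | succ i ih =>
    obtain ⟨a, -, ha⟩ := Finset.exists_ne_zero_of_sum_ne_zero (h2 i)
    have hσ : (winStrat M W q_def).σ _ a ≠ 0 := fun h => ha (by rw [h, zero_mul])
    have hδ : M.δ (π i.castSucc) a (π i.succ) ≠ 0 := fun h => ha (by rw [h, mul_zero])
    have hhead : ((List.ofFn (fun j : Fin (i.1 + 1) =>
        π ⟨i.1 - j.1, lt_of_le_of_lt (Nat.sub_le i.1 j.1) (Nat.lt_succ_of_lt i.isLt)⟩)).head?.getD q_def)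
        = π i.castSucc := by
      rw [List.ofFn_succ]
      rfl
    have ha2 := winStrat_pick M W q_def _ a hσ
    rw [hhead] at ha2
    have hex : ∃ a', post M (π i.castSucc) a' ⊆ W := by
      have hmem : π i.castSucc ∈ PreM M W := by
        have := ih
        rw [hWfix] at this
        exact (Finset.mem_inter.1 this).2
      unfold PreM at hmem
      exact (Finset.mem_filter.1 hmem).2
    rw [dif_pos hex] at ha2
    have hpost : post M (π i.castSucc) a ⊆ W := by rw [ha2]; exact hex.choose_spec
    apply hpost
    unfold post
    rw [Finset.mem_filter]
    exact ⟨Finset.mem_univ _, lt_of_le_of_ne (M.nonneg _ _ _) (Ne.symm hδ)⟩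

lemma sure_win [Nonempty Q] [Nonempty A] (M : MDP Q A) (T W : Finset Q)
    (hWfix : W = T ∩ PreM M W) {μ0 : Q → ℝ} (hdist : IsDist μ0)
    (hsupp : ∀ q, μ0 q ≠ 0 → q ∈ W) :
    ∀ n, Mmass M μ0 (winStrat M W (Classical.arbitrary Q)) n T = 1 := by
  intro n
  unfold Mmass Mdist
  rw [Finset.sum_comm]
  have hπ : ∀ π : Fin (n+1) → Q,
      ∑ q ∈ T, (if π (Fin.last n) = q
        then pathProb M μ0 (winStrat M W (Classical.arbitrary Q)) π else 0)
      = pathProb M μ0 (winStrat M W (Classical.arbitrary Q)) π := by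
    intro π
    rw [Finset.sum_ite_eq T (π (Fin.last n))]
    by_cases hp : pathProb M μ0 (winStrat M W (Classical.arbitrary Q)) π = 0
    · rw [hp]; simp
    · rw [if_pos]
      have hmem := winStrat_path M T W hWfix hsupp π (Classical.arbitrary Q) hp (Fin.last n)
      rw [hWfix] at hmem
      exact (Finset.mem_inter.1 hmem).1
  rw [Finset.sum_congr rfl (fun π _ => hπ π)]
  exact sum_pathProb M hdist.2 _ n

lemma dirac_collapse (f : Q → ℝ) (q : Q) : ∑ c, dirac q c * f c = f q := by
  unfold dirac
  simp [ite_mul]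

lemma convex_bound (w m : Q → ℝ) (hw0 : ∀ q, 0 ≤ w q) (hw1 : ∑ q, w q = 1)
    (hm1 : ∀ q, m q ≤ 1) (q1 : Q) (d : ℝ) (h1 : m q1 ≤ 1 - d) :
    ∑ q, w q * m q ≤ 1 - w q1 * d := by
  have step : ∀ q, w q * m q ≤ w q * (if q = q1 then 1 - d else 1) := by
    intro q
    apply mul_le_mul_of_nonneg_left _ (hw0 q)
    split
    · next h => rw [h]; exact h1
    · exact hm1 q
  calc ∑ q, w q * m q ≤ ∑ q, w q * (if q = q1 then 1 - d else 1) :=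
        Finset.sum_le_sum (fun q _ => step q)
    _ = ∑ q, (w q - if q = q1 then w q * d else 0) := by
        apply Finset.sum_congr rfl
        intro q _
        split <;> ring
    _ = 1 - w q1 * d := by
        rw [Finset.sum_sub_distrib, hw1, Finset.sum_ite_eq' Finset.univ q1 (fun q => w q * d)]
        simp

lemma escape [Nonempty Q] [Nonempty A] (M : MDP Q A) (T : Finset Q) (η : ℝ)
    (hη0 : 0 < η) (hη1 : η ≤ 1)
    (hηle : ∀ q a q', 0 < M.δ q a q' → η ≤ M.δ q a q') :
    ∀ (k : ℕ) (q : Q), q ∉ SIter M T k → ∀ α : Strat Q A,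
      ∃ n ≤ k, Mmass M (dirac q) α n T ≤ 1 - (η / (Fintype.card A : ℝ))^k := by
  set β := η / (Fintype.card A : ℝ) with hβ
  have hA : (0:ℝ) < (Fintype.card A : ℝ) := by exact_mod_cast Fintype.card_pos
  have hA1 : (1:ℝ) ≤ (Fintype.card A : ℝ) := by exact_mod_cast Fintype.card_pos
  have hβ0 : 0 < β := div_pos hη0 hA
  have hβ1 : β ≤ 1 := by
    rw [hβ, div_le_one hA]
    exact hη1.trans hA1
  intro k
  induction k with
  | zero => intro q hq; simp [SIter] at hq
  | succ k ih =>
    intro q hq α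
    by_cases hqT : q ∈ T
    · have hpre : q ∉ PreM M (SIter M T k) := by
        intro h
        apply hq
        show q ∈ T ∩ PreM M (SIter M T k)
        exact Finset.mem_inter.2 ⟨hqT, h⟩
      have hex : ∃ a, 1/(Fintype.card A : ℝ) ≤ α.σ [q] a := by
        by_contra hcon
        push_neg at hcon
        have hlt : ∑ a, α.σ [q] a < ∑ _a : A, 1/(Fintype.card A : ℝ) :=
          Finset.sum_lt_sum_of_nonempty Finset.univ_nonempty (fun a _ => hcon a)
        rw [α.sum_one, Finset.sum_const, Finset.card_univ, nsmul_eq_mul,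
          mul_one_div, div_self (ne_of_gt hA)] at hlt
        exact lt_irrefl 1 hlt
      obtain ⟨a, haσ⟩ := hex
      have hsub : ¬ post M q a ⊆ SIter M T k := by
        intro hsub
        apply hpre
        unfold PreM
        rw [Finset.mem_filter]
        exact ⟨Finset.mem_univ q, a, hsub⟩
      obtain ⟨q1, hq1post, hq1S⟩ := Finset.not_subset.1 hsub
      have hδpos : 0 < M.δ q a q1 := by
        unfold post at hq1post
        exact (Finset.mem_filter.1 hq1post).2
      obtain ⟨n, hn, hm⟩ := ih q1 hq1S (shiftStrat α q)
      refine ⟨n+1, by omega, ?_⟩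
      rw [Mmass_succ, dirac_collapse]
      have hb := convex_bound (stepW M α q)
        (fun q' => Mmass M (dirac q') (shiftStrat α q) n T)
        (stepW_nonneg M α q) (stepW_sum M α q)
        (fun q' => Mmass_le_one M (dirac_isDist q') _ n T) q1 (β^k) hm
      refine hb.trans ?_
      have hW : β ≤ stepW M α q q1 := by
        calc β = (1/(Fintype.card A : ℝ)) * η := by rw [hβ]; ring
          _ ≤ α.σ [q] a * M.δ q a q1 :=
            mul_le_mul haσ (hηle _ _ _ hδpos) hη0.le (α.nonneg _ a)
          _ ≤ stepW M α q q1 :=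
            Finset.single_le_sum
              (fun a' _ => mul_nonneg (α.nonneg _ a') (M.nonneg _ a' _))
              (Finset.mem_univ a)
      have hstep : β^(k+1) ≤ stepW M α q q1 * β^k := by
        rw [pow_succ, mul_comm]
        exact mul_le_mul_of_nonneg_right hW (pow_nonneg hβ0.le k)
      linarith
    · refine ⟨0, by omega, ?_⟩
      have h0 : Mmass M (dirac q) α 0 T = 0 := by
        unfold Mmass
        rw [Finset.sum_congr rfl (fun q' _ => Mdist_zero M _ α q')]
        unfold dirac
        rw [Finset.sum_ite_eq' T q (fun _ => (1:ℝ)), if_neg hqT]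
      rw [h0]
      have : β^(k+1) ≤ 1 := pow_le_one₀ hβ0.le hβ1
      linarith

open scoped Classical in
lemma limit_implies_sure [Nonempty Q] [Nonempty A] (M : MDP Q A) (T : Finset Q)
    {μ0 : Q → ℝ} (hd : IsDist μ0)
    (hls : ∀ ε : ℝ, 0 < ε → ∃ α : Strat Q A, ∀ n, 1 - ε ≤ Mmass M μ0 α n T) :
    ∃ α : Strat Q A, ∀ n, Mmass M μ0 α n T = 1 := by
  -- the fixpoint W
  obtain ⟨N, hN⟩ := SIter_fix M T
  have hWfix : SIter M T N = T ∩ PreM M (SIter M T N) := by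
    conv_lhs => rw [← hN]
    rfl
  set W := SIter M T N with hW
  by_cases hsupp : ∀ q, μ0 q ≠ 0 → q ∈ W
  · exact ⟨winStrat M W (Classical.arbitrary Q), sure_win M T W hWfix hd hsupp⟩
  · exfalso
    -- the minimal positive transition probability η
    set s : Finset (Q × A × Q) := Finset.univ.filter (fun p => 0 < M.δ p.1 p.2.1 p.2.2)
      with hs
    have hsne : s.Nonempty := by
      have q := Classical.arbitrary Q
      have a := Classical.arbitrary A
      have hex : ∃ q', 0 < M.δ q a q' := by
        by_contra hcon
        push_neg at hcon
        have hle : ∑ q', M.δ q a q' ≤ 0 := Finset.sum_nonpos (fun q' _ => hcon q')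
        rw [M.sum_one] at hle
        linarith
      obtain ⟨q', hq'⟩ := hex
      exact ⟨(q, a, q'), Finset.mem_filter.2 ⟨Finset.mem_univ _, hq'⟩⟩
    set η := s.inf' hsne (fun p => M.δ p.1 p.2.1 p.2.2) with hη
    have hη0 : 0 < η := by
      rw [hη, Finset.lt_inf'_iff]
      intro p hp
      rw [hs, Finset.mem_filter] at hp
      exact hp.2
    have hηle : ∀ q a q', 0 < M.δ q a q' → η ≤ M.δ q a q' := by
      intro q a q' h
      exact Finset.inf'_le (fun p : Q × A × Q => M.δ p.1 p.2.1 p.2.2)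
        (Finset.mem_filter.2 ⟨Finset.mem_univ ((q, a, q') : Q × A × Q), h⟩)
    have hη1 : η ≤ 1 := by
      obtain ⟨p, hp⟩ := hsne
      have h1 : η ≤ M.δ p.1 p.2.1 p.2.2 := Finset.inf'_le _ hp
      have h2 : M.δ p.1 p.2.1 p.2.2 ≤ 1 := by
        rw [← M.sum_one p.1 p.2.1]
        exact Finset.single_le_sum (fun q' _ => M.nonneg _ _ q') (Finset.mem_univ p.2.2)
      linarith
    push_neg at hsupp
    obtain ⟨q0, hq0ne, hq0W⟩ := hsupp
    have hc : 0 < μ0 q0 := lt_of_le_of_ne (hd.1 q0) (Ne.symm hq0ne)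
    have hA : (0:ℝ) < (Fintype.card A : ℝ) := by exact_mod_cast Fintype.card_pos
    have hβ0 : 0 < η / (Fintype.card A : ℝ) := div_pos hη0 hA
    have hεpos : 0 < μ0 q0 * (η / (Fintype.card A : ℝ))^N / 2 := by positivity
    obtain ⟨α, hα⟩ := hls _ hεpos
    obtain ⟨n, hn, hm⟩ := escape M T η hη0 hη1 hηle N q0 hq0W α
    have hdec := Mmass_decomp M μ0 α n T
    have hb := convex_bound μ0 (fun q => Mmass M (dirac q) α n T) hd.1 hd.2
      (fun q => Mmass_le_one M (dirac_isDist q) α n T) q0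
      ((η / (Fintype.card A : ℝ))^N) hm
    have hαn := hα n
    rw [hdec] at hαn
    have hpos : 0 < μ0 q0 * (η / (Fintype.card A : ℝ))^N := by positivity
    linarith

end AlwaysSync

/-- For the always synchronizing objective with function `sum_T`, the three winning
modes coincide: the sets of initial distributions that are sure winning
(`∃α, ∀n, M^α_n(T) = 1`), almost-sure winning (`∃α, inf_n M^α_n(T) = 1`), and
limit-sure winning (`∀ε>0, ∃α, ∀n, M^α_n(T) ≥ 1−ε`) are equal. -/
theorem always_sync_modes_coincide {Q A : Type} [Fintype Q] [DecidableEq Q]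
    [Fintype A] [Nonempty Q] [Nonempty A]
    (M : MDP Q A) (T : Finset Q) :
    {μ0 : Q → ℝ | IsDist μ0 ∧ ∃ α : Strat Q A, ∀ n, Mmass M μ0 α n T = 1} =
      {μ0 : Q → ℝ | IsDist μ0 ∧ ∃ α : Strat Q A,
        ∀ ε : ℝ, 0 < ε → ∀ n, 1 - ε ≤ Mmass M μ0 α n T} ∧
    {μ0 : Q → ℝ | IsDist μ0 ∧ ∃ α : Strat Q A, ∀ n, Mmass M μ0 α n T = 1} =
      {μ0 : Q → ℝ | IsDist μ0 ∧ ∀ ε : ℝ, 0 < ε → ∃ α : Strat Q A,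
        ∀ n, 1 - ε ≤ Mmass M μ0 α n T} := by
  constructor
  · ext μ0
    simp only [Set.mem_setOf_eq]
    constructor
    · rintro ⟨hd, α, h⟩
      exact ⟨hd, α, fun ε hε n => by rw [h n]; linarith⟩
    · rintro ⟨hd, α, h⟩
      refine ⟨hd, α, fun n => le_antisymm (AlwaysSync.Mmass_le_one M hd α n T) ?_⟩
      apply le_of_forall_pos_le_add
      intro ε hε
      have := h ε hε n
      linarith
  · ext μ0
    simp only [Set.mem_setOf_eq]
    constructor
    · rintro ⟨hd, α, h⟩
      exact ⟨hd, fun ε hε => ⟨α, fun n => by rw [h n]; linarith⟩⟩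
    · rintro ⟨hd, hls⟩
      refine ⟨hd, ?_⟩
      apply AlwaysSync.limit_implies_sure M T hd
      intro ε hε
      exact hls ε hε
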